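/- Let k ≥ 2 be an integer. In the Laurent polynomial ring L = AddMonoidAlgebra ℂ (Fin 3 → ℤ) (Laurent polynomials over ℂ in three variables x, y, z), consider the four monomials A = x²z^{−(2k−1)}, B = y²z^{−(2k−1)}, C = x y^{−1} z^{k}, D = x^{−1} y z^{k}, i.e., the monomials with exponent vectors (2,0,1−2k), (0,2,1−2k), (1,−1,k), (−1,1,k). Then the ℂ-subalgebra of L generated by {A, B, C, D} is isomorphic as a ℂ-algebra to MvPolynomial (Fin 4) ℂ modulo the ideal generated by X·W − Y·Z (where X, Y, Z, W denote the four polynomial variables, sent to A, B, C, D respectively). -/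

import Mathlib

open MvPolynomial

lemma quotientKerEquivRange_mk {R A B : Type*} [CommRing R] [CommRing A] [Algebra R A]
    [Semiring B] [Algebra R B] (f : A →ₐ[R] B) (x : A) :
    (Ideal.quotientKerEquivRange (R := R) f (Ideal.Quotient.mk _ x)).1 = f x := by
  simp only [Ideal.quotientKerEquivRange, AlgEquiv.trans_apply, Ideal.quotientEquivAlgOfEq_mk,
    Ideal.quotientKerAlgEquivOfSurjective_apply, RingHom.kerLift_mk]
  rfl

noncomputable def Vv (k : ℕ) : Fin 4 → (Fin 3 → ℤ) :=
  ![![2, 0, 1 - 2 * (k : ℤ)], ![0, 2, 1 - 2 * (k : ℤ)], ![1, -1, (k : ℤ)], ![-1, 1, (k : ℤ)]]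

noncomputable def Ee (k : ℕ) : (Fin 4 →₀ ℕ) →+ (Fin 3 → ℤ) :=
  Finsupp.liftAddHom fun i => multiplesHom _ (Vv k i)

lemma Ee_apply (k : ℕ) (m : Fin 4 →₀ ℕ) :
    Ee k m = (m 0) • Vv k 0 + (m 1) • Vv k 1 + (m 2) • Vv k 2 + (m 3) • Vv k 3 := by
  have : Ee k m = m.sum fun i n => n • Vv k i := by
    simp [Ee, Finsupp.liftAddHom_apply]
    rfl
  rw [this, Finsupp.sum_fintype _ _ (by intro i; simp)]
  simp [Fin.sum_univ_four]

lemma Ee_injOn (k : ℕ) (hk : 2 ≤ k) {m m' : Fin 4 →₀ ℕ}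
    (hm : m 0 = 0 ∨ m 3 = 0) (hm' : m' 0 = 0 ∨ m' 3 = 0)
    (h : Ee k m = Ee k m') : m = m' := by
  rw [Ee_apply, Ee_apply] at h
  have h0 := congrFun h 0
  have h1 := congrFun h 1
  have h2 := congrFun h 2
  simp only [Pi.add_apply, Pi.smul_apply] at h0 h1 h2
  simp only [Vv, Matrix.cons_val_zero, Matrix.cons_val_one, Matrix.head_cons,
    Matrix.cons_val_two, Matrix.tail_cons, Matrix.cons_val_three] at h0 h1 h2
  simp only [nsmul_eq_mul] at h0 h1 h2
  have hab : (m 0 : ℤ) + m 1 = m' 0 + m' 1 := by linarith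
  have hK : (k : ℤ) ≠ 0 := by positivity
  have hcd : (m 2 : ℤ) + m 3 = m' 2 + m' 3 := by
    refine mul_left_cancel₀ hK ?_
    nlinarith [h2, hab]
  have e0 : m 0 = m' 0 := by omega
  have e1 : m 1 = m' 1 := by omega
  have e2 : m 2 = m' 2 := by omega
  have e3 : m 3 = m' 3 := by omega
  ext i
  fin_cases i
  · exact e0
  · exact e1
  · exact e2
  · exact e3

noncomputable def psi (k : ℕ) : MvPolynomial (Fin 4) ℂ →ₐ[ℂ] AddMonoidAlgebra ℂ (Fin 3 → ℤ) :=
  AddMonoidAlgebra.mapDomainAlgHom ℂ ℂ (Ee k)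

lemma psi_eq_aeval (k : ℕ) :
    psi k = aeval (fun i => AddMonoidAlgebra.single (Vv k i) (1 : ℂ)) := by
  apply MvPolynomial.algHom_ext
  intro i
  rw [aeval_X]
  show AddMonoidAlgebra.mapDomain (Ee k) (AddMonoidAlgebra.single (Finsupp.single i 1) 1) = _
  rw [AddMonoidAlgebra.mapDomain_single]
  simp [Ee]

/-- Reduction of a monomial modulo the binomial ideal. -/
lemma red_monomial (n : ℕ) : ∀ (m : Fin 4 →₀ ℕ), m 0 ≤ n → ∀ c : ℂ,
    ∃ r : MvPolynomial (Fin 4) ℂ, (∀ m' ∈ r.support, m' 0 = 0 ∨ m' 3 = 0) ∧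
      monomial m c - r ∈ Ideal.span {(X 0 * X 3 - X 1 * X 2 : MvPolynomial (Fin 4) ℂ)} := by
  induction n with
  | zero =>
    intro m hm c
    refine ⟨monomial m c, ?_, by simp⟩
    intro m' hm'
    rw [MvPolynomial.support_monomial] at hm'
    split_ifs at hm' with h
    · simp at hm'
    · simp at hm'
      subst hm'
      left; omega
  | succ n ih =>
    intro m hm c
    by_cases h : m 0 = 0 ∨ m 3 = 0
    · refine ⟨monomial m c, ?_, by simp⟩
      intro m' hm'
      rw [MvPolynomial.support_monomial] at hm'
      split_ifs at hm' with hc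
      · simp at hm'
      · simp at hm'; subst hm'; exact h
    · push_neg at h
      obtain ⟨h0, h3⟩ := h
      set m' : Fin 4 →₀ ℕ := m - Finsupp.single 0 1 - Finsupp.single 3 1 with hm'def
      have hsum : Finsupp.single (0 : Fin 4) 1 + Finsupp.single 3 1 + m' = m := by
        ext i
        simp only [hm'def, Finsupp.add_apply, Finsupp.tsub_apply, Finsupp.single_apply]
        fin_cases i <;> simp <;> omega
      set m'' : Fin 4 →₀ ℕ := m' + (Finsupp.single 1 1 + Finsupp.single 2 1) with hm''def
      have key : monomial m c - monomial m'' c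
          = (X 0 * X 3 - X 1 * X 2) * monomial m' c := by
        rw [sub_mul]
        rw [show (X 0 : MvPolynomial (Fin 4) ℂ) = monomial (Finsupp.single 0 1) 1 from rfl,
          show (X 3 : MvPolynomial (Fin 4) ℂ) = monomial (Finsupp.single 3 1) 1 from rfl,
          show (X 1 : MvPolynomial (Fin 4) ℂ) = monomial (Finsupp.single 1 1) 1 from rfl,
          show (X 2 : MvPolynomial (Fin 4) ℂ) = monomial (Finsupp.single 2 1) 1 from rfl,
          monomial_mul, monomial_mul, monomial_mul, monomial_mul]
        rw [show Finsupp.single (0:Fin 4) 1 + Finsupp.single 3 1 + m' = m from hsum]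
        rw [show Finsupp.single (1:Fin 4) 1 + Finsupp.single 2 1 + m' = m'' from
          (add_comm _ _)]
        simp
      have hm''0 : m'' 0 ≤ n := by
        have : m'' 0 = m 0 - 1 := by
          simp [hm''def, hm'def, Finsupp.single_apply]
        omega
      obtain ⟨r, hr1, hr2⟩ := ih m'' hm''0 c
      refine ⟨r, hr1, ?_⟩
      have : monomial m c - r = (X 0 * X 3 - X 1 * X 2) * monomial m' c
          + (monomial m'' c - r) := by
        rw [← key]; ring
      rw [this]
      exact Ideal.add_mem _ (Ideal.mul_mem_right _ _ (Ideal.subset_span rfl)) hr2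

lemma red_exists (p : MvPolynomial (Fin 4) ℂ) :
    ∃ r : MvPolynomial (Fin 4) ℂ, (∀ m' ∈ r.support, m' 0 = 0 ∨ m' 3 = 0) ∧
      p - r ∈ Ideal.span {(X 0 * X 3 - X 1 * X 2 : MvPolynomial (Fin 4) ℂ)} := by
  induction p using MvPolynomial.induction_on' with
  | monomial m c => exact red_monomial (m 0) m le_rfl c
  | add p q hp hq =>
    obtain ⟨r1, hr1, hr1'⟩ := hp
    obtain ⟨r2, hr2, hr2'⟩ := hq
    refine ⟨r1 + r2, ?_, ?_⟩
    · intro m' hm'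
      have := MvPolynomial.support_add hm'
      rw [Finset.mem_union] at this
      rcases this with h | h
      · exact hr1 m' h
      · exact hr2 m' h
    · have : p + q - (r1 + r2) = (p - r1) + (q - r2) := by ring
      rw [this]
      exact Ideal.add_mem _ hr1' hr2'

lemma reduced_zero (k : ℕ) (hk : 2 ≤ k) (r : MvPolynomial (Fin 4) ℂ)
    (hred : ∀ m' ∈ r.support, m' 0 = 0 ∨ m' 3 = 0)
    (hr : aeval (fun i => AddMonoidAlgebra.single (Vv k i) (1 : ℂ)) r = 0) : r = 0 := by
  rw [← psi_eq_aeval] at hr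
  have hmd : Finsupp.mapDomain (Ee k) (AddMonoidAlgebra.coeff (r : AddMonoidAlgebra ℂ (Fin 4 →₀ ℕ))) = 0 :=
    congrArg AddMonoidAlgebra.coeff hr
  have hinj := Finsupp.mapDomain_injOn (M := ℂ) {x : Fin 4 →₀ ℕ | x 0 = 0 ∨ x 3 = 0}
    (f := Ee k) (fun a ha b hb hab => Ee_injOn k hk ha hb hab)
  have h0 : Finsupp.mapDomain (Ee k) (AddMonoidAlgebra.coeff (0 : AddMonoidAlgebra ℂ (Fin 4 →₀ ℕ))) = 0 :=
    Finsupp.mapDomain_zero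
  exact AddMonoidAlgebra.coeff_injective
    (hinj (fun m hm => hred m hm) (by simp) (hmd.trans h0.symm))

lemma ker_eq (k : ℕ) (hk : 2 ≤ k) :
    RingHom.ker (aeval (fun i => AddMonoidAlgebra.single (Vv k i) (1 : ℂ)) :
        MvPolynomial (Fin 4) ℂ →ₐ[ℂ] AddMonoidAlgebra ℂ (Fin 3 → ℤ))
      = Ideal.span {(X 0 * X 3 - X 1 * X 2 : MvPolynomial (Fin 4) ℂ)} := by
  apply le_antisymm
  · intro p hp
    rw [RingHom.mem_ker] at hp
    obtain ⟨r, hred, hspan⟩ := red_exists p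
    have hker : Ideal.span {(X 0 * X 3 - X 1 * X 2 : MvPolynomial (Fin 4) ℂ)} ≤
        RingHom.ker (aeval (fun i => AddMonoidAlgebra.single (Vv k i) (1 : ℂ)) :
          MvPolynomial (Fin 4) ℂ →ₐ[ℂ] AddMonoidAlgebra ℂ (Fin 3 → ℤ)) := by
      rw [Ideal.span_le]
      rintro _ rfl
      rw [SetLike.mem_coe, RingHom.mem_ker, map_sub, map_mul, map_mul, aeval_X, aeval_X,
        aeval_X, aeval_X, AddMonoidAlgebra.single_mul_single, AddMonoidAlgebra.single_mul_single]
      have : Vv k 0 + Vv k 3 = Vv k 1 + Vv k 2 := by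
        funext j
        simp only [Vv, Pi.add_apply, Matrix.cons_val_zero, Matrix.cons_val_one, Matrix.head_cons,
          Matrix.cons_val_two, Matrix.tail_cons, Matrix.cons_val_three]
        fin_cases j <;> simp
      rw [this, sub_self]
    have hr0 : aeval (fun i => AddMonoidAlgebra.single (Vv k i) (1 : ℂ)) r = 0 := by
      have := hker hspan
      rw [RingHom.mem_ker, map_sub, hp] at this
      linear_combination -this
    have := reduced_zero k hk r hred hr0
    subst this
    simpa using hspan
  · rw [Ideal.span_le]
    rintro _ rfl
    rw [SetLike.mem_coe, RingHom.mem_ker, map_sub, map_mul, map_mul, aeval_X, aeval_X,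
      aeval_X, aeval_X, AddMonoidAlgebra.single_mul_single, AddMonoidAlgebra.single_mul_single]
    have : Vv k 0 + Vv k 3 = Vv k 1 + Vv k 2 := by
      funext j
      simp only [Vv, Pi.add_apply, Matrix.cons_val_zero, Matrix.cons_val_one, Matrix.head_cons,
        Matrix.cons_val_two, Matrix.tail_cons, Matrix.cons_val_three]
      fin_cases j <;> simp
    rw [this, sub_self]

theorem stmt_5 (k : ℕ) (hk : 2 ≤ k)
    (A B C D : AddMonoidAlgebra ℂ (Fin 3 → ℤ))
    (hA : A = AddMonoidAlgebra.single ![2, 0, 1 - 2 * (k : ℤ)] 1)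
    (hB : B = AddMonoidAlgebra.single ![0, 2, 1 - 2 * (k : ℤ)] 1)
    (hC : C = AddMonoidAlgebra.single ![1, -1, (k : ℤ)] 1)
    (hD : D = AddMonoidAlgebra.single ![-1, 1, (k : ℤ)] 1) :
    ∃ e : (MvPolynomial (Fin 4) ℂ ⧸
        Ideal.span {(X 0 * X 3 - X 1 * X 2 : MvPolynomial (Fin 4) ℂ)}) ≃ₐ[ℂ]
        Algebra.adjoin ℂ ({A, B, C, D} : Set (AddMonoidAlgebra ℂ (Fin 3 → ℤ))),
      (e (Ideal.Quotient.mk _ (X 0)) : AddMonoidAlgebra ℂ (Fin 3 → ℤ)) = A ∧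
      (e (Ideal.Quotient.mk _ (X 1)) : AddMonoidAlgebra ℂ (Fin 3 → ℤ)) = B ∧
      (e (Ideal.Quotient.mk _ (X 2)) : AddMonoidAlgebra ℂ (Fin 3 → ℤ)) = C ∧
      (e (Ideal.Quotient.mk _ (X 3)) : AddMonoidAlgebra ℂ (Fin 3 → ℤ)) = D := by
  set v : Fin 4 → AddMonoidAlgebra ℂ (Fin 3 → ℤ) :=
    fun i => AddMonoidAlgebra.single (Vv k i) (1 : ℂ) with hv
  have hv0 : v 0 = A := by rw [hA]; simp [hv, Vv]
  have hv1 : v 1 = B := by rw [hB]; simp [hv, Vv]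
  have hv2 : v 2 = C := by rw [hC]; simp [hv, Vv]
  have hv3 : v 3 = D := by rw [hD]; simp [hv, Vv]
  have hset : ({A, B, C, D} : Set (AddMonoidAlgebra ℂ (Fin 3 → ℤ))) = Set.range v := by
    ext x
    constructor
    · rintro (rfl | rfl | rfl | rfl)
      · exact ⟨0, hv0⟩
      · exact ⟨1, hv1⟩
      · exact ⟨2, hv2⟩
      · exact ⟨3, hv3⟩
    · rintro ⟨i, rfl⟩
      fin_cases i
      · rw [show v ⟨0, by norm_num⟩ = A from hv0]; left; rfl
      · rw [show v ⟨1, by norm_num⟩ = B from hv1]; right; left; rfl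
      · rw [show v ⟨2, by norm_num⟩ = C from hv2]; right; right; left; rfl
      · rw [show v ⟨3, by norm_num⟩ = D from hv3]; right; right; right; rfl
  have hadj : Algebra.adjoin ℂ ({A, B, C, D} : Set (AddMonoidAlgebra ℂ (Fin 3 → ℤ)))
      = (aeval v : MvPolynomial (Fin 4) ℂ →ₐ[ℂ] _).range := by
    rw [hset, Algebra.adjoin_range_eq_range_aeval]
  let e1 : (MvPolynomial (Fin 4) ℂ ⧸
      Ideal.span {(X 0 * X 3 - X 1 * X 2 : MvPolynomial (Fin 4) ℂ)}) ≃ₐ[ℂ]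
      (MvPolynomial (Fin 4) ℂ ⧸ RingHom.ker (aeval v : MvPolynomial (Fin 4) ℂ →ₐ[ℂ] _)) :=
    Ideal.quotientEquivAlgOfEq ℂ (ker_eq k hk).symm
  let e2 := Ideal.quotientKerEquivRange (R := ℂ) (aeval v : MvPolynomial (Fin 4) ℂ →ₐ[ℂ] _)
  let e3 := Subalgebra.equivOfEq _ _ hadj.symm
  have key : ∀ i : Fin 4,
      ((((e1.trans e2).trans e3) (Ideal.Quotient.mk _ (X i))) :
        AddMonoidAlgebra ℂ (Fin 3 → ℤ)) = v i := by
    intro i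
    simp only [AlgEquiv.trans_apply, e1, Ideal.quotientEquivAlgOfEq_mk, e3,
      Subalgebra.equivOfEq_apply]
    show (Ideal.quotientKerEquivRange (R := ℂ) (aeval v)
      (Ideal.Quotient.mk _ (X i))).1 = v i
    rw [quotientKerEquivRange_mk, aeval_X]
  exact ⟨(e1.trans e2).trans e3, by rw [key 0]; exact hv0, by rw [key 1]; exact hv1,
    by rw [key 2]; exact hv2, by rw [key 3]; exact hv3⟩
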